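/- Let m ≥ 2 be an integer, let ε be a real number with 0 < ε < 1, and set t = ⌈(2/ε)·ln(2m)⌉; assume t ≤ m − 1. Then there exists a set K = {k_1, …, k_t} of t distinct integers from {1, …, m−1} that is 'good' for all residues g with g ≢ 0 (mod m); that is, for every integer g with g mod m ≠ 0, (1/t²)·(∑_{i=1}^{t} cos(2π k_i g / m))² < ε. -/

import Mathlib

open Real

lemma my_sinh_le (x : ℝ) (hx : 0 ≤ x) : Real.sinh x ≤ x * Real.cosh x := by
  have key : ∀ y : ℝ, HasDerivAt (fun z => z * Real.cosh z - Real.sinh z) (y * Real.sinh y) y := by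
    intro y
    have h := ((hasDerivAt_id y).mul (Real.hasDerivAt_cosh y)).sub (Real.hasDerivAt_sinh y)
    refine h.congr_deriv ?_
    simp [id]
  have hmono : MonotoneOn (fun z => z * Real.cosh z - Real.sinh z) (Set.Ici 0) := by
    apply monotoneOn_of_deriv_nonneg (convex_Ici 0)
    · exact ((continuous_id.mul Real.continuous_cosh).sub Real.continuous_sinh).continuousOn
    · intro y hy
      exact ((key y).differentiableAt).differentiableWithinAt
    · intro y hy
      rw [interior_Ici] at hy
      rw [(key y).deriv]
      exact mul_nonneg (le_of_lt hy) (Real.sinh_nonneg_iff.mpr (le_of_lt hy))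
  have h0 := hmono (Set.self_mem_Ici) (Set.mem_Ici.mpr hx) hx
  simp at h0
  linarith

lemma my_cosh_le (x : ℝ) (hx : 0 ≤ x) : Real.cosh x ≤ Real.exp (x ^ 2 / 2) := by
  have key : ∀ y : ℝ, HasDerivAt (fun z => z ^ 2 / 2 - Real.log (Real.cosh z))
      (y - Real.sinh y / Real.cosh y) y := by
    intro y
    have h1 : HasDerivAt (fun z : ℝ => z ^ 2 / 2) y y := by
      have := (hasDerivAt_pow 2 y).div_const 2
      refine this.congr_deriv ?_
      simp
    have h2 : HasDerivAt (fun z => Real.log (Real.cosh z)) (Real.sinh y / Real.cosh y) y :=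
      (Real.hasDerivAt_cosh y).log (Real.cosh_pos y).ne'
    exact h1.sub h2
  have hmono : MonotoneOn (fun z => z ^ 2 / 2 - Real.log (Real.cosh z)) (Set.Ici 0) := by
    apply monotoneOn_of_deriv_nonneg (convex_Ici 0)
    · exact ((continuous_pow 2).div_const 2).continuousOn.sub
        ((Real.continuous_cosh.log (fun y => (Real.cosh_pos y).ne')).continuousOn)
    · intro y hy
      exact ((key y).differentiableAt).differentiableWithinAt
    · intro y hy
      rw [interior_Ici] at hy
      rw [(key y).deriv]
      rw [sub_nonneg, div_le_iff₀ (Real.cosh_pos y)]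
      exact my_sinh_le y (le_of_lt hy)
  have h0 := hmono (Set.self_mem_Ici) (Set.mem_Ici.mpr hx) hx
  simp at h0
  have hlog : Real.log (Real.cosh x) ≤ x ^ 2 / 2 := by linarith
  calc Real.cosh x = Real.exp (Real.log (Real.cosh x)) := (Real.exp_log (Real.cosh_pos x)).symm
  _ ≤ Real.exp (x ^ 2 / 2) := Real.exp_le_exp.mpr hlog

lemma my_exp_le (x c : ℝ) (h1 : -1 ≤ c) (h2 : c ≤ 1) :
    Real.exp (x * c) ≤ Real.cosh x + c * Real.sinh x := by
  have ha : (0:ℝ) ≤ (1 + c) / 2 := by linarith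
  have hb : (0:ℝ) ≤ (1 - c) / 2 := by linarith
  have hab : (1 + c) / 2 + (1 - c) / 2 = 1 := by ring
  have h := convexOn_exp.2 (Set.mem_univ x) (Set.mem_univ (-x)) ha hb hab
  simp only [smul_eq_mul] at h
  have harg : (1 + c) / 2 * x + (1 - c) / 2 * (-x) = x * c := by ring
  rw [harg] at h
  rw [Real.cosh_eq, Real.sinh_eq]
  linarith

lemma my_amgm2 (A w : ℝ) (hA : 0 ≤ A) (hw : 0 ≤ w) (u : ℕ) :
    A ^ u * w ≤ (((u : ℝ) * A + w) / (u + 1)) ^ (u + 1) := by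
  have hu1 : (0:ℝ) < (u:ℝ) + 1 := by positivity
  have hw1 : (0:ℝ) ≤ (u:ℝ) / (u + 1) := by positivity
  have hw2 : (0:ℝ) ≤ 1 / ((u:ℝ) + 1) := by positivity
  have hsum : (u:ℝ) / (u + 1) + 1 / ((u:ℝ) + 1) = 1 := by field_simp
  have h := Real.geom_mean_le_arith_mean2_weighted hw1 hw2 hA hw hsum
  have hbase : (0:ℝ) ≤ A ^ ((u:ℝ) / (u + 1)) * w ^ (1 / ((u:ℝ) + 1)) := by positivity
  have h2 := pow_le_pow_left₀ hbase h (u + 1)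
  calc A ^ u * w
      = (A ^ ((u:ℝ) / (u + 1)) * w ^ (1 / ((u:ℝ) + 1))) ^ (u + 1) := by
        rw [mul_pow, ← Real.rpow_natCast (A ^ ((u:ℝ) / (u + 1))) (u+1),
          ← Real.rpow_natCast (w ^ (1 / ((u:ℝ) + 1))) (u+1),
          ← Real.rpow_mul hA, ← Real.rpow_mul hw]
        push_cast
        rw [div_mul_cancel₀ _ hu1.ne', div_mul_cancel₀ _ hu1.ne']
        rw [Real.rpow_natCast, Real.rpow_one]
    _ ≤ (((u:ℝ) * A + w) / (u + 1)) ^ (u + 1) := by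
        apply pow_le_pow_left₀ hbase
        calc A ^ ((u:ℝ) / (u + 1)) * w ^ (1 / ((u:ℝ) + 1))
            ≤ (u:ℝ) / (u + 1) * A + 1 / ((u:ℝ) + 1) * w := h
          _ = ((u:ℝ) * A + w) / (u + 1) := by ring

lemma my_maclaurin (s : Finset ℕ) (x : ℕ → ℝ) (hx : ∀ k ∈ s, 0 ≤ x k) (t : ℕ) :
    ∑ K ∈ s.powersetCard t, ∏ k ∈ K, x k ≤
      (s.card.choose t : ℝ) * ((∑ k ∈ s, x k) / s.card) ^ t := by
  induction s using Finset.induction_on generalizing t with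
  | empty =>
    cases t with
    | zero => simp
    | succ u =>
      rw [Finset.powersetCard_eq_empty.mpr (by simp)]
      simp
  | @insert a s' ha ih =>
    have hxa : 0 ≤ x a := hx a (Finset.mem_insert_self a s')
    have hx' : ∀ k ∈ s', 0 ≤ x k := fun k hk => hx k (Finset.mem_insert_of_mem hk)
    cases t with
    | zero => simp
    | succ u =>
      set n := s'.card with hn
      set A := (∑ k ∈ s', x k) / n with hA
      have hA0 : 0 ≤ A := by
        apply div_nonneg _ (Nat.cast_nonneg n)
        exact Finset.sum_nonneg hx'
      have hsplit : (insert a s').powersetCard (u+1) =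
          s'.powersetCard (u+1) ∪ (s'.powersetCard u).image (insert a) :=
        Finset.powersetCard_succ_insert ha u
      have hdisj : Disjoint (s'.powersetCard (u+1)) ((s'.powersetCard u).image (insert a)) := by
        rw [Finset.disjoint_left]
        intro K hK hK2
        rw [Finset.mem_powersetCard] at hK
        obtain ⟨L, hL, rfl⟩ := Finset.mem_image.mp hK2
        exact ha (hK.1 (Finset.mem_insert_self a L))
      have himg : ∑ K ∈ (s'.powersetCard u).image (insert a), ∏ k ∈ K, x k
          = x a * ∑ K ∈ s'.powersetCard u, ∏ k ∈ K, x k := by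
        rw [Finset.sum_image, Finset.mul_sum]
        · apply Finset.sum_congr rfl
          intro K hK
          rw [Finset.mem_powersetCard] at hK
          have haK : a ∉ K := fun h => ha (hK.1 h)
          rw [Finset.prod_insert haK]
        · intro K hK L hL hKL
          rw [Finset.mem_coe, Finset.mem_powersetCard] at hK hL
          have haK : a ∉ K := fun h => ha (hK.1 h)
          have haL : a ∉ L := fun h => ha (hL.1 h)
          have := congrArg (fun S => Finset.erase S a) hKL
          simpa [Finset.erase_insert haK, Finset.erase_insert haL] using this
      rw [hsplit, Finset.sum_union hdisj, himg]
      have hsum' : ∑ k ∈ s', x k = n * A := by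
        rcases Nat.eq_zero_or_pos n with h0 | h0
        · rw [hA, h0]
          have : s' = ∅ := Finset.card_eq_zero.mp h0
          simp [this]
        · rw [hA]
          field_simp
      have hcard : (insert a s').card = n + 1 := Finset.card_insert_of_notMem ha
      have hsumins : ∑ k ∈ insert a s', x k = n * A + x a := by
        rw [Finset.sum_insert ha, hsum']; ring
      rw [hcard, hsumins]
      -- target: E_{u+1}(s') + x a * E_u(s') ≤ C(n+1,u+1) * ((n*A + x a)/(n+1))^(u+1)
      have IH1 := ih hx' (u+1)
      have IH2 := ih hx' u
      push_cast
      by_cases hun : u ≤ n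
      · -- real identities
        have hid2 : ((n:ℝ) + 1) * (n.choose u : ℝ) = ((n+1).choose (u+1) : ℝ) * (u + 1) := by
          have := Nat.add_one_mul_choose_eq n u
          exact_mod_cast congrArg (fun z : ℕ => (z : ℝ)) this
        have hid1 : ((n:ℝ) + 1) * (n.choose (u+1) : ℝ) = ((n+1).choose (u+1) : ℝ) * ((n:ℝ) - u) := by
          have hpascal : (n+1).choose (u+1) = n.choose u + n.choose (u+1) := Nat.choose_succ_succ n u
          have h1 : ((n+1).choose (u+1) : ℝ) = (n.choose u : ℝ) + (n.choose (u+1) : ℝ) := by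
            exact_mod_cast congrArg (fun z : ℕ => (z : ℝ)) hpascal
          rw [h1]
          have : ((n:ℝ) + 1) * (n.choose u : ℝ) = ((n.choose u : ℝ) + (n.choose (u+1) : ℝ)) * (u + 1) := by
            rw [← h1]; exact hid2
          nlinarith [this]
        set c : ℝ := ((n+1).choose (u+1) : ℝ) with hc
        have hc0 : (0:ℝ) ≤ c := Nat.cast_nonneg _
        set y := x a with hy
        set w : ℝ := (((n:ℝ) - u) * A + ((u:ℝ)+1) * y) / ((n:ℝ)+1) with hwdef
        have hnu : (0:ℝ) ≤ (n:ℝ) - u := by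
          have : (u:ℝ) ≤ n := by exact_mod_cast hun
          linarith
        have hw0 : 0 ≤ w := by
          apply div_nonneg _ (Nat.cast_add_one_pos n).le
          have := mul_nonneg hnu hA0
          have h2 := mul_nonneg ((Nat.cast_add_one_pos u).le : (0:ℝ) ≤ (u:ℝ)+1) hxa
          linarith
        have hamgm := my_amgm2 A w hA0 hw0 u
        have hB : ((u:ℝ) * A + w) / ((u:ℝ) + 1) = ((n:ℝ) * A + y) / ((n:ℝ) + 1) := by
          rw [hwdef]
          field_simp
          ring
        rw [hB] at hamgm
        -- now combine
        have key : (n.choose (u+1) : ℝ) * A ^ (u+1) + (n.choose u : ℝ) * y * A ^ u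
            ≤ c * (((n:ℝ) * A + y) / ((n:ℝ)+1)) ^ (u+1) := by
          have hn1 : (0:ℝ) < (n:ℝ) + 1 := Nat.cast_add_one_pos n
          rw [← mul_le_mul_iff_right₀ hn1]
          calc ((n:ℝ)+1) * ((n.choose (u+1) : ℝ) * A ^ (u+1) + (n.choose u : ℝ) * y * A ^ u)
              = (((n:ℝ)+1) * (n.choose (u+1):ℝ)) * A ^ (u+1)
                + (((n:ℝ)+1) * (n.choose u : ℝ)) * (y * A ^ u) := by ring
            _ = c * (((n:ℝ) - u) * A ^ (u+1) + ((u:ℝ)+1) * y * A ^ u) := by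
                rw [hid1, hid2]; ring
            _ = c * (A ^ u * (((n:ℝ)+1) * w)) := by
                have hw1 : ((n:ℝ)+1) * w = ((n:ℝ)-(u:ℝ))*A + ((u:ℝ)+1)*y := by
                  rw [hwdef]
                  field_simp
                rw [hw1]
                ring
            _ = ((n:ℝ)+1) * (c * (A ^ u * w)) := by ring
            _ ≤ ((n:ℝ)+1) * (c * (((n:ℝ) * A + y) / ((n:ℝ)+1)) ^ (u+1)) := by
                apply mul_le_mul_of_nonneg_left _ (le_of_lt hn1)
                exact mul_le_mul_of_nonneg_left hamgm hc0
        calc (∑ K ∈ s'.powersetCard (u+1), ∏ k ∈ K, x k)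
              + x a * ∑ K ∈ s'.powersetCard u, ∏ k ∈ K, x k
            ≤ (n.choose (u+1) : ℝ) * A ^ (u+1) + x a * ((n.choose u : ℝ) * A ^ u) := by
              apply add_le_add IH1
              exact mul_le_mul_of_nonneg_left IH2 hxa
          _ = (n.choose (u+1) : ℝ) * A ^ (u+1) + (n.choose u : ℝ) * x a * A ^ u := by ring
          _ ≤ c * (((n:ℝ) * A + x a) / ((n:ℝ)+1)) ^ (u+1) := key
          _ = ((n+1).choose (u+1) : ℝ) * (((n:ℝ) * A + x a) / ((n:ℝ)+1)) ^ (u+1) := rfl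
      · -- u > n : all powersetCards empty / choose zero
        push_neg at hun
        have h1 : s'.powersetCard (u+1) = ∅ := Finset.powersetCard_eq_empty.mpr (by omega)
        have h2 : s'.powersetCard u = ∅ := Finset.powersetCard_eq_empty.mpr (by omega)
        have h3 : (n+1).choose (u+1) ≠ 0 → u + 1 ≤ n + 1 := fun h => Nat.le_of_lt_succ (by
          by_contra hcon
          exact h (Nat.choose_eq_zero_of_lt (by omega)))
        have h4 : (n+1).choose (u+1) = 0 ∨ u + 1 ≤ n + 1 := by
          by_cases hc : u + 1 ≤ n + 1
          · right; exact hc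
          · left; exact Nat.choose_eq_zero_of_lt (by omega)
        rcases h4 with h4 | h4
        · rw [h1, h2, h4]
          simp
        · omega

open Classical in
lemma my_chernoff (N t : ℕ) (hN : 1 ≤ N) (htN : t ≤ N) (c : ℕ → ℝ)
    (hc : ∀ k ∈ Finset.Icc 1 N, |c k| ≤ 1) (B₀ : ℝ) (hB0 : 0 ≤ B₀)
    (hsum : ∑ k ∈ Finset.Icc 1 N, c k ≤ B₀) (lam s₀ : ℝ) (hlam : 0 ≤ lam) :
    ((((Finset.Icc 1 N).powersetCard t).filter (fun K => s₀ ≤ ∑ k ∈ K, c k)).card : ℝ)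
      ≤ Real.exp (-lam * s₀ + t * lam ^ 2 / 2 + lam * B₀) * (N.choose t : ℝ) := by
  set Ω := (Finset.Icc 1 N).powersetCard t with hΩ
  set Bad := Ω.filter (fun K => s₀ ≤ ∑ k ∈ K, c k) with hBad
  have hNcard : (Finset.Icc 1 N).card = N := by
    rw [Nat.card_Icc]; omega
  -- step 1 : card ≤ sum of exp over Ω
  have step1 : (Bad.card : ℝ) ≤ ∑ K ∈ Ω, Real.exp (lam * ((∑ k ∈ K, c k) - s₀)) := by
    have h1 : (Bad.card : ℝ) = ∑ K ∈ Bad, (1:ℝ) := by simp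
    rw [h1]
    calc ∑ K ∈ Bad, (1:ℝ) ≤ ∑ K ∈ Bad, Real.exp (lam * ((∑ k ∈ K, c k) - s₀)) := by
          apply Finset.sum_le_sum
          intro K hK
          have hs : s₀ ≤ ∑ k ∈ K, c k := (Finset.mem_filter.mp hK).2
          have : 0 ≤ lam * ((∑ k ∈ K, c k) - s₀) := mul_nonneg hlam (by linarith)
          linarith [Real.add_one_le_exp (lam * ((∑ k ∈ K, c k) - s₀))]
      _ ≤ ∑ K ∈ Ω, Real.exp (lam * ((∑ k ∈ K, c k) - s₀)) := by
          apply Finset.sum_le_sum_of_subset_of_nonneg (Finset.filter_subset _ _)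
          intro K _ _
          positivity
  -- step 2 : rewrite as product
  have step2 : ∀ K ∈ Ω, Real.exp (lam * ((∑ k ∈ K, c k) - s₀))
      = Real.exp (-lam * s₀) * ∏ k ∈ K, Real.exp (lam * c k) := by
    intro K _
    rw [← Real.exp_sum]
    rw [← Real.exp_add]
    congr 1
    rw [mul_sub, ← Finset.mul_sum]
    ring
  rw [Finset.sum_congr rfl step2, ← Finset.mul_sum] at step1
  -- step 3 : Maclaurin
  have hx : ∀ k ∈ Finset.Icc 1 N, 0 ≤ Real.exp (lam * c k) := fun k _ => (Real.exp_pos _).le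
  have step3 := my_maclaurin (Finset.Icc 1 N) (fun k => Real.exp (lam * c k)) hx t
  rw [hNcard] at step3
  -- step 4 : average bound
  have havg : (∑ k ∈ Finset.Icc 1 N, Real.exp (lam * c k)) / (N:ℝ)
      ≤ Real.exp (lam ^ 2 / 2 + lam * B₀ / N) := by
    have hNpos : (0:ℝ) < N := by exact_mod_cast hN
    have hsum2 : ∑ k ∈ Finset.Icc 1 N, Real.exp (lam * c k)
        ≤ N * Real.cosh lam + B₀ * Real.sinh lam := by
      calc ∑ k ∈ Finset.Icc 1 N, Real.exp (lam * c k)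
          ≤ ∑ k ∈ Finset.Icc 1 N, (Real.cosh lam + c k * Real.sinh lam) := by
            apply Finset.sum_le_sum
            intro k hk
            have := hc k hk
            rw [abs_le] at this
            exact my_exp_le lam (c k) this.1 this.2
        _ = N * Real.cosh lam + (∑ k ∈ Finset.Icc 1 N, c k) * Real.sinh lam := by
            rw [Finset.sum_add_distrib, ← Finset.sum_mul]
            simp [hNcard]
        _ ≤ N * Real.cosh lam + B₀ * Real.sinh lam := by
            have hsh : 0 ≤ Real.sinh lam := Real.sinh_nonneg_iff.mpr hlam
            nlinarith [mul_le_mul_of_nonneg_right hsum hsh]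
    have hch : 0 < Real.cosh lam := Real.cosh_pos lam
    calc (∑ k ∈ Finset.Icc 1 N, Real.exp (lam * c k)) / (N:ℝ)
        ≤ (N * Real.cosh lam + B₀ * Real.sinh lam) / N := by
          gcongr
      _ = Real.cosh lam + B₀ * Real.sinh lam / N := by field_simp
      _ ≤ Real.cosh lam + B₀ * (lam * Real.cosh lam) / N := by
          gcongr
          exact my_sinh_le lam hlam
      _ = Real.cosh lam * (1 + lam * B₀ / N) := by field_simp
      _ ≤ Real.exp (lam ^ 2 / 2) * Real.exp (lam * B₀ / N) := by
          apply mul_le_mul (my_cosh_le lam hlam)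
          · linarith [Real.add_one_le_exp (lam * B₀ / N)]
          · positivity
          · positivity
      _ = Real.exp (lam ^ 2 / 2 + lam * B₀ / N) := (Real.exp_add _ _).symm
  -- step 5 : combine
  have hbase : (0:ℝ) ≤ (∑ k ∈ Finset.Icc 1 N, Real.exp (lam * c k)) / (N:ℝ) := by positivity
  have step5 : ((∑ k ∈ Finset.Icc 1 N, Real.exp (lam * c k)) / (N:ℝ)) ^ t
      ≤ Real.exp (t * lam ^ 2 / 2 + lam * B₀) := by
    calc ((∑ k ∈ Finset.Icc 1 N, Real.exp (lam * c k)) / (N:ℝ)) ^ t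
        ≤ Real.exp (lam ^ 2 / 2 + lam * B₀ / N) ^ t := pow_le_pow_left₀ hbase havg t
      _ = Real.exp (t * (lam ^ 2 / 2 + lam * B₀ / N)) := by
          rw [← Real.exp_nat_mul]
      _ ≤ Real.exp (t * lam ^ 2 / 2 + lam * B₀) := by
          apply Real.exp_le_exp.mpr
          have hNpos : (0:ℝ) < N := by exact_mod_cast hN
          have htN' : (t:ℝ) ≤ N := by exact_mod_cast htN
          have h1 : (t:ℝ) * (lam * B₀ / N) ≤ lam * B₀ := by
            rw [mul_div_assoc']
            rw [div_le_iff₀ hNpos]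
            nlinarith [mul_nonneg hlam hB0]
          nlinarith
  calc (Bad.card : ℝ)
      ≤ Real.exp (-lam * s₀) * ∑ K ∈ Ω, ∏ k ∈ K, Real.exp (lam * c k) := step1
    _ ≤ Real.exp (-lam * s₀) * ((N.choose t : ℝ)
        * ((∑ k ∈ Finset.Icc 1 N, Real.exp (lam * c k)) / (N:ℝ)) ^ t) := by
        apply mul_le_mul_of_nonneg_left step3 (Real.exp_pos _).le
    _ ≤ Real.exp (-lam * s₀) * ((N.choose t : ℝ) * Real.exp (t * lam ^ 2 / 2 + lam * B₀)) := by
        apply mul_le_mul_of_nonneg_left _ (Real.exp_pos _).le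
        exact mul_le_mul_of_nonneg_left step5 (Nat.cast_nonneg _)
    _ = Real.exp (-lam * s₀ + t * lam ^ 2 / 2 + lam * B₀) * (N.choose t : ℝ) := by
        simp only [Real.exp_add]
        ring

lemma my_sum_cos (m : ℕ) (hm : 2 ≤ m) (j : ℕ) (hj1 : 1 ≤ j) (hj2 : j ≤ m - 1) :
    ∑ k ∈ Finset.Icc 1 (m-1), Real.cos (2 * π * k * j / m) = -1 := by
  have hm0 : (0:ℝ) < m := by positivity
  set θ : ℝ := 2 * π * j / m with hθ
  set z : ℂ := Complex.exp (θ * Complex.I) with hz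
  have hzpow : ∀ k : ℕ, z ^ k = Complex.exp ((k * θ : ℝ) * Complex.I) := by
    intro k
    rw [hz, ← Complex.exp_nat_mul]
    congr 1
    push_cast
    ring
  have hzm : z ^ m = 1 := by
    rw [hzpow m]
    have harg : ((m * θ : ℝ) : ℂ) * Complex.I = (j : ℤ) * (2 * π * Complex.I) := by
      have : (m : ℝ) * θ = j * (2 * π) := by
        rw [hθ]
        field_simp
      rw [this]
      push_cast
      ring
    rw [harg]
    exact Complex.exp_int_mul_two_pi_mul_I j
  have hz1 : z ≠ 1 := by
    intro hcon
    rw [hz] at hcon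
    obtain ⟨n, hn⟩ := Complex.exp_eq_one_iff.mp hcon
    have hI : (θ : ℂ) = n * (2 * π) := by
      have h2 : (n : ℂ) * (2 * ↑π * Complex.I) = ((n : ℂ) * (2 * ↑π)) * Complex.I := by ring
      rw [h2] at hn
      exact mul_right_cancel₀ Complex.I_ne_zero hn
    have hre : θ = n * (2 * π) := by
      have := congrArg Complex.re hI
      simpa using this
    rw [hθ] at hre
    have hπ : (0:ℝ) < π := Real.pi_pos
    have hj : (j : ℝ) = n * m := by
      field_simp at hre
      nlinarith [hre]
    have hj1' : (1:ℝ) ≤ (j:ℝ) := by exact_mod_cast hj1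
    have hj2' : (j:ℝ) ≤ (m:ℝ) - 1 := by
      have h := hj2
      have : (j:ℝ) ≤ ((m - 1 : ℕ) : ℝ) := by exact_mod_cast h
      rw [Nat.cast_sub (by omega)] at this
      push_cast at this
      linarith
    rcases le_or_gt (n:ℝ) 0 with hn0 | hn0
    · nlinarith
    · have : (1:ℝ) ≤ (n:ℝ) := by exact_mod_cast hn0
      nlinarith
  have hgeom : ∑ k ∈ Finset.range m, z ^ k = 0 := by
    rw [geom_sum_eq hz1, hzm]
    simp
  have hre : ∑ k ∈ Finset.range m, Real.cos (k * θ) = 0 := by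
    have := congrArg Complex.re hgeom
    rw [Complex.re_sum] at this
    simp only [Complex.zero_re] at this
    rw [← this]
    apply Finset.sum_congr rfl
    intro k _
    rw [hzpow k, Complex.exp_ofReal_mul_I_re]
  have hsplit : (Finset.range m).erase 0 = Finset.Icc 1 (m-1) := by
    ext k
    simp only [Finset.mem_erase, Finset.mem_range, Finset.mem_Icc]
    omega
  have h0mem : (0:ℕ) ∈ Finset.range m := Finset.mem_range.mpr (by omega)
  have := Finset.add_sum_erase (Finset.range m) (fun k => Real.cos (k * θ)) h0mem
  rw [hsplit] at this
  simp only [Nat.cast_zero, zero_mul, Real.cos_zero] at this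
  have hfin : ∑ k ∈ Finset.Icc 1 (m-1), Real.cos (k * θ) = -1 := by linarith [this ▸ hre]
  rw [← hfin]
  apply Finset.sum_congr rfl
  intro k _
  congr 1
  rw [hθ]
  field_simp

lemma my_cos_period (m : ℕ) (hm : 2 ≤ m) (k : ℕ) (g : ℤ) (j : ℕ) (hj : g % (m:ℤ) = (j:ℤ)) :
    Real.cos (2 * π * k * (g:ℝ) / m) = Real.cos (2 * π * k * (j:ℝ) / m) := by
  have hm0 : (m:ℝ) ≠ 0 := by positivity
  set q : ℤ := g / (m:ℤ) with hq
  have hgd : (m:ℤ) * q + (j:ℤ) = g := by rw [hq, ← hj]; exact Int.mul_ediv_add_emod g m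
  have hg : (g:ℝ) = (m:ℝ) * (q:ℝ) + (j:ℝ) := by exact_mod_cast congrArg (fun z : ℤ => (z:ℝ)) hgd.symm
  have harg : 2 * π * k * (g:ℝ) / m = 2 * π * k * (j:ℝ) / m + ((k:ℤ) * q : ℤ) * (2 * π) := by
    rw [hg]
    push_cast
    field_simp
    ring
  rw [harg, Real.cos_add_int_mul_two_pi]

lemma my_cos_reflect (m : ℕ) (hm : 2 ≤ m) (k j j' : ℕ) (hj : j + j' = m) :
    Real.cos (2 * π * k * (j:ℝ) / m) = Real.cos (2 * π * k * (j':ℝ) / m) := by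
  have hm0 : (m:ℝ) ≠ 0 := by positivity
  have hjr : (j:ℝ) = (m:ℝ) - (j':ℝ) := by
    have : (j:ℝ) + (j':ℝ) = (m:ℝ) := by exact_mod_cast hj
    linarith
  have harg : 2 * π * k * (j:ℝ) / m = -(2 * π * k * (j':ℝ) / m) + (k:ℤ) * (2 * π) := by
    rw [hjr]
    push_cast
    field_simp
    ring
  rw [harg, Real.cos_add_int_mul_two_pi, Real.cos_neg]


/-- The "good set" lemma for quantum fingerprinting: for an integer `m ≥ 2` and
`0 < ε < 1`, with `t = ⌈(2/ε)·ln(2m)⌉` and `t ≤ m − 1`, there is a set `K` of `t` distinct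
integers from `{1, …, m−1}` such that for every integer `g` not divisible by `m`,
`(1/t²)·(∑_{k ∈ K} cos(2πkg/m))² < ε`. -/
theorem good_set_exists (m : ℕ) (hm : 2 ≤ m) (ε : ℝ) (hε0 : 0 < ε) (hε1 : ε < 1)
    (t : ℕ) (ht : t = ⌈(2 / ε) * Real.log (2 * m)⌉₊) (htm : t ≤ m - 1) :
    ∃ K : Finset ℕ, K ⊆ Finset.Icc 1 (m - 1) ∧ K.card = t ∧
      ∀ g : ℤ, ¬ ((m : ℤ) ∣ g) →
        (1 / (t : ℝ) ^ 2) *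
          (∑ k ∈ K, Real.cos (2 * Real.pi * (k : ℝ) * (g : ℝ) / (m : ℝ))) ^ 2 < ε := by
  classical
  classical
  set N := m - 1 with hN
  set h : ℕ := m / 2 with hh
  have hN1 : 1 ≤ N := by omega
  have hm0 : (0:ℝ) < m := by positivity
  have hlog : 0 < Real.log (2 * m) := by
    apply Real.log_pos
    have : (2:ℝ) ≤ (m:ℝ) := by exact_mod_cast hm
    linarith
  have hle : (2 / ε) * Real.log (2 * m) ≤ (t:ℝ) := by
    rw [ht]; exact Nat.le_ceil _
  have ht1 : 1 ≤ t := by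
    by_contra hcon
    push_neg at hcon
    interval_cases t
    · simp at hle
      have : 0 < (2 / ε) * Real.log (2 * m) := by positivity
      linarith
  have htpos : (0:ℝ) < t := by exact_mod_cast ht1
  have hεt : Real.log (2 * m) ≤ ε * t / 2 := by
    rw [div_mul_eq_mul_div, div_le_iff₀ hε0] at hle
    nlinarith
  have hexp : Real.exp (-(ε * t / 2)) ≤ 1 / (2 * m) := by
    rw [Real.exp_neg]
    rw [show (1:ℝ) / (2 * m) = (2 * (m:ℝ))⁻¹ by ring]
    apply inv_anti₀ (by positivity)
    calc (2:ℝ) * m = Real.exp (Real.log (2 * m)) := (Real.exp_log (by positivity)).symm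
      _ ≤ Real.exp (ε * t / 2) := Real.exp_le_exp.mpr hεt
  set sr : ℝ := Real.sqrt ε with hsr
  have hsr0 : 0 < sr := Real.sqrt_pos.mpr hε0
  have hsr2 : sr ^ 2 = ε := Real.sq_sqrt hε0.le
  have hsr1 : sr < 1 := by
    rw [hsr, show (1:ℝ) = Real.sqrt 1 by simp]
    exact Real.sqrt_lt_sqrt hε0.le hε1
  set c : ℕ → ℕ → ℝ := fun j k => Real.cos (2 * π * k * j / m) with hc
  have hcabs : ∀ j : ℕ, ∀ k ∈ Finset.Icc 1 N, |c j k| ≤ 1 := by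
    intro j k _
    exact Real.abs_cos_le_one _
  set Ω : Finset (Finset ℕ) := (Finset.Icc 1 N).powersetCard t with hΩ
  have hΩcard : Ω.card = N.choose t := by
    rw [hΩ, Finset.card_powersetCard, Nat.card_Icc]
    norm_num
  have hchoosepos : 0 < N.choose t := Nat.choose_pos htm
  set U : Finset (Finset ℕ) := (Finset.Icc 1 h).biUnion (fun j =>
      Ω.filter (fun K => sr * t ≤ ∑ k ∈ K, c j k) ∪
      Ω.filter (fun K => sr * t ≤ ∑ k ∈ K, -(c j k))) with hU
  have hjrange : ∀ j ∈ Finset.Icc 1 h, 1 ≤ j ∧ j ≤ m - 1 := by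
    intro j hj
    rw [Finset.mem_Icc] at hj
    omega
  have hup : ∀ j ∈ Finset.Icc 1 h,
      ((Ω.filter (fun K => sr * t ≤ ∑ k ∈ K, c j k)).card : ℝ)
        ≤ Real.exp (-(ε * t / 2)) * (N.choose t : ℝ) := by
    intro j hj
    obtain ⟨hj1, hj2⟩ := hjrange j hj
    have hsumc : ∑ k ∈ Finset.Icc 1 N, c j k ≤ 0 := by
      rw [hN, my_sum_cos m hm j hj1 hj2]
      norm_num
    have H := my_chernoff N t hN1 htm (c j) (hcabs j) 0 le_rfl hsumc sr (sr * t) hsr0.le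
    have harg : -sr * (sr * (t:ℝ)) + (t:ℝ) * sr ^ 2 / 2 + sr * 0 = -(ε * t / 2) := by
      rw [show -sr * (sr * (t:ℝ)) + (t:ℝ) * sr ^ 2 / 2 + sr * 0
          = -(sr ^ 2 * t / 2) by ring, hsr2]
    rw [harg] at H
    exact H
  have hlo : ∀ j ∈ Finset.Icc 1 h,
      ((Ω.filter (fun K => sr * t ≤ ∑ k ∈ K, -(c j k))).card : ℝ)
        ≤ Real.exp (-(ε * t / 2)) * Real.exp sr * (N.choose t : ℝ) := by
    intro j hj
    obtain ⟨hj1, hj2⟩ := hjrange j hj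
    have habs' : ∀ k ∈ Finset.Icc 1 N, |(fun k => -(c j k)) k| ≤ 1 := by
      intro k hk
      simpa using hcabs j k hk
    have hsumc : ∑ k ∈ Finset.Icc 1 N, -(c j k) ≤ 1 := by
      rw [Finset.sum_neg_distrib, hN, my_sum_cos m hm j hj1 hj2]
      norm_num
    have H := my_chernoff N t hN1 htm (fun k => -(c j k)) habs' 1 zero_le_one hsumc sr (sr * t) hsr0.le
    have harg : -sr * (sr * (t:ℝ)) + (t:ℝ) * sr ^ 2 / 2 + sr * 1 = -(ε * t / 2) + sr := by
      rw [show -sr * (sr * (t:ℝ)) + (t:ℝ) * sr ^ 2 / 2 + sr * 1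
          = -(sr ^ 2 * t / 2) + sr by ring, hsr2]
    rw [harg, Real.exp_add] at H
    exact H
  have hcount : (U.card : ℝ) < (N.choose t : ℝ) := by
    have h1 : U.card ≤ ∑ j ∈ Finset.Icc 1 h,
        ((Ω.filter (fun K => sr * t ≤ ∑ k ∈ K, c j k)).card +
         (Ω.filter (fun K => sr * t ≤ ∑ k ∈ K, -(c j k))).card) := by
      calc U.card ≤ ∑ j ∈ Finset.Icc 1 h, (Ω.filter (fun K => sr * t ≤ ∑ k ∈ K, c j k) ∪
            Ω.filter (fun K => sr * t ≤ ∑ k ∈ K, -(c j k))).card := Finset.card_biUnion_le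
        _ ≤ _ := by
          apply Finset.sum_le_sum
          intro j _
          exact Finset.card_union_le _ _
    have h2 : (U.card : ℝ) ≤ ∑ j ∈ Finset.Icc 1 h,
        (Real.exp (-(ε * t / 2)) * (N.choose t : ℝ)
          + Real.exp (-(ε * t / 2)) * Real.exp sr * (N.choose t : ℝ)) := by
      calc (U.card : ℝ) ≤ ((∑ j ∈ Finset.Icc 1 h,
          ((Ω.filter (fun K => sr * t ≤ ∑ k ∈ K, c j k)).card +
           (Ω.filter (fun K => sr * t ≤ ∑ k ∈ K, -(c j k))).card) : ℕ) : ℝ) := by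
            exact_mod_cast h1
        _ = ∑ j ∈ Finset.Icc 1 h,
            (((Ω.filter (fun K => sr * t ≤ ∑ k ∈ K, c j k)).card : ℝ) +
             ((Ω.filter (fun K => sr * t ≤ ∑ k ∈ K, -(c j k))).card : ℝ)) := by
            push_cast
            rfl
        _ ≤ _ := by
          apply Finset.sum_le_sum
          intro j hj
          exact add_le_add (hup j hj) (hlo j hj)
    rw [Finset.sum_const, Nat.card_Icc] at h2
    simp only [nsmul_eq_mul] at h2
    have hhm : ((h + 1 - 1 : ℕ) : ℝ) ≤ (m : ℝ) / 2 := by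
      have : (h:ℝ) ≤ (m:ℝ)/2 := by
        rw [le_div_iff₀ (by norm_num : (0:ℝ) < 2)]
        exact_mod_cast Nat.div_mul_le_self m 2
      simpa using this
    have he : Real.exp sr < 2.7182818286 := lt_of_lt_of_le
      (Real.exp_lt_exp.mpr hsr1) Real.exp_one_lt_d9.le
    have hC0 : (0:ℝ) < (N.choose t : ℝ) := by exact_mod_cast hchoosepos
    have hexp0 : 0 < Real.exp (-(ε * t / 2)) := Real.exp_pos _
    calc (U.card : ℝ)
        ≤ ((h + 1 - 1 : ℕ) : ℝ) * (Real.exp (-(ε * t / 2)) * (N.choose t : ℝ)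
          + Real.exp (-(ε * t / 2)) * Real.exp sr * (N.choose t : ℝ)) := h2
      _ = (((h + 1 - 1 : ℕ) : ℝ) * Real.exp (-(ε * t / 2))) * (1 + Real.exp sr) * (N.choose t : ℝ) := by
          ring
      _ ≤ ((m:ℝ)/2 * (1/(2*m))) * (1 + 2.7182818286) * (N.choose t : ℝ) := by
          have h4 : ((h + 1 - 1 : ℕ) : ℝ) * Real.exp (-(ε * t / 2)) ≤ ((m:ℝ)/2) * (1/(2*m)) := by
            apply mul_le_mul hhm hexp (Real.exp_pos _).le (by positivity)
          apply mul_le_mul_of_nonneg_right _ hC0.le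
          apply mul_le_mul h4 _ (by positivity) (by positivity)
          linarith
      _ = (3.7182818286/4) * (N.choose t : ℝ) := by
          field_simp
          ring
      _ < (N.choose t : ℝ) := by nlinarith
  -- extract a good K
  have hUcard : U.card < Ω.card := by
    rw [hΩcard]
    exact_mod_cast hcount
  have hnsub : ¬ (Ω ⊆ U) := fun hss => absurd (Finset.card_le_card hss) (by omega)
  obtain ⟨K, hKΩ, hKU⟩ := Finset.not_subset.mp hnsub
  rw [hΩ, Finset.mem_powersetCard] at hKΩ
  obtain ⟨hKsub, hKcard⟩ := hKΩ
  refine ⟨K, hKsub, hKcard, ?_⟩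
  have hgood : ∀ j ∈ Finset.Icc 1 h, |∑ k ∈ K, c j k| < sr * t := by
    intro j hj
    by_contra hcon
    push_neg at hcon
    apply hKU
    rw [hU, Finset.mem_biUnion]
    refine ⟨j, hj, ?_⟩
    rw [Finset.mem_union]
    have hKΩ' : K ∈ Ω := by
      rw [hΩ, Finset.mem_powersetCard]
      exact ⟨hKsub, hKcard⟩
    rcases le_abs.mp hcon with hpos | hneg
    · left
      exact Finset.mem_filter.mpr ⟨hKΩ', hpos⟩
    · right
      apply Finset.mem_filter.mpr ⟨hKΩ', ?_⟩
      rw [Finset.sum_neg_distrib]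
      exact hneg
  intro g hg
  -- reduce g to j1 ∈ Icc 1 h
  have hmz : (m:ℤ) ≠ 0 := by exact_mod_cast (by omega : m ≠ 0)
  have hmodnn : 0 ≤ g % (m:ℤ) := Int.emod_nonneg g hmz
  have hmodlt : g % (m:ℤ) < (m:ℤ) := Int.emod_lt_of_pos g (by exact_mod_cast (by omega : 0 < m))
  have hmodne : g % (m:ℤ) ≠ 0 := by
    intro hz
    exact hg (Int.dvd_iff_emod_eq_zero.mpr hz)
  set j0 : ℕ := (g % (m:ℤ)).toNat with hj0def
  have hj0 : g % (m:ℤ) = (j0:ℤ) := (Int.toNat_of_nonneg hmodnn).symm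
  have hj01 : 1 ≤ j0 := by omega
  have hj02 : j0 ≤ m - 1 := by omega
  set j1 : ℕ := if j0 ≤ h then j0 else m - j0 with hj1def
  have hj1mem : j1 ∈ Finset.Icc 1 h := by
    rw [Finset.mem_Icc, hj1def]
    split_ifs with hcase
    · omega
    · omega
  have hcos : ∀ k : ℕ, Real.cos (2 * π * (k:ℝ) * (g:ℝ) / m) = c j1 k := by
    intro k
    rw [my_cos_period m hm k g j0 hj0]
    rw [hj1def]
    split_ifs with hcase
    · rfl
    · rw [my_cos_reflect m hm k j0 (m - j0) (by omega)]
  have hSeq : (∑ k ∈ K, Real.cos (2 * π * (k:ℝ) * (g:ℝ) / m)) = ∑ k ∈ K, c j1 k :=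
    Finset.sum_congr rfl (fun k _ => hcos k)
  rw [hSeq]
  have habs := hgood j1 hj1mem
  obtain ⟨hlo', hhi'⟩ := abs_lt.mp habs
  have hsq : (∑ k ∈ K, c j1 k) ^ 2 < (sr * t) ^ 2 := sq_lt_sq' hlo' hhi'
  have hsrt : (sr * (t:ℝ)) ^ 2 = ε * t ^ 2 := by
    rw [mul_pow, hsr2]
  have ht2 : (0:ℝ) < (t:ℝ) ^ 2 := by positivity
  calc (1 / (t:ℝ) ^ 2) * (∑ k ∈ K, c j1 k) ^ 2
      < (1 / (t:ℝ) ^ 2) * (ε * t ^ 2) := by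
        apply mul_lt_mul_of_pos_left _ (by positivity)
        rw [← hsrt]
        exact hsq
    _ = ε := by
        field_simp
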